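/- Let F_q be a finite field, k a positive integer, F = (F_1, …, F_{2k−1}) a full flag on F_q^{2k}, and T a subgroup of GL(2k, q). Suppose that any two distinct subspaces in Orb_T(F_k) intersect trivially and that Stab_T(F_k) is the trivial subgroup {I_{2k}}. Then Orb_T(F) is an optimum distance full flag code: any two distinct flags in Orb_T(F) have flag distance exactly 2k². -/

import Mathlib

open Module

/-- The action of `A ∈ GL(n, F)` on subspaces of `F^n`: `U · A` is the image of `U`
under the invertible linear map given by the matrix `A`. -/
noncomputable def mapGL {F : Type*} [Field F] {n : ℕ}
    (A : GL (Fin n) F) (U : Submodule F (Fin n → F)) : Submodule F (Fin n → F) :=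
  U.map (Matrix.toLin' (A : Matrix (Fin n) (Fin n) F))

/-- The subspace distance `d_S(U, W) = dim U + dim W − 2 dim(U ∩ W)`. -/
noncomputable def subspaceDist {F V : Type*} [Field F] [AddCommGroup V] [Module F V]
    (U W : Submodule F V) : ℕ :=
  finrank F U + finrank F W - 2 * finrank F ↥(U ⊓ W)

/-- The linear equivalence of `F^n` given by `A ∈ GL(n, F)`. -/
noncomputable def glEquiv {F : Type*} [Field F] {n : ℕ} (A : GL (Fin n) F) :
    (Fin n → F) ≃ₗ[F] (Fin n → F) :=
  LinearEquiv.ofLinear (Matrix.toLin' (A : Matrix (Fin n) (Fin n) F))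
    (Matrix.toLin' ((A⁻¹ : GL (Fin n) F) : Matrix (Fin n) (Fin n) F))
    (by rw [← Matrix.toLin'_mul, ← Units.val_mul, mul_inv_cancel, Units.val_one,
      Matrix.toLin'_one])
    (by rw [← Matrix.toLin'_mul, ← Units.val_mul, inv_mul_cancel, Units.val_one,
      Matrix.toLin'_one])

lemma mapGL_eq_map_glEquiv {F : Type*} [Field F] {n : ℕ} (A : GL (Fin n) F)
    (U : Submodule F (Fin n → F)) :
    mapGL A U = U.map ((glEquiv A : (Fin n → F) ≃ₗ[F] (Fin n → F)) :
      (Fin n → F) →ₗ[F] (Fin n → F)) := rfl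

lemma finrank_mapGL {F : Type*} [Field F] {n : ℕ} (A : GL (Fin n) F)
    (U : Submodule F (Fin n → F)) : finrank F (mapGL A U) = finrank F U := by
  rw [mapGL_eq_map_glEquiv]
  exact LinearEquiv.finrank_map_eq (glEquiv A) U

lemma mapGL_mono {F : Type*} [Field F] {n : ℕ} (A : GL (Fin n) F)
    {U W : Submodule F (Fin n → F)} (h : U ≤ W) : mapGL A U ≤ mapGL A W :=
  Submodule.map_mono h

lemma mapGL_mul {F : Type*} [Field F] {n : ℕ} (A B : GL (Fin n) F)
    (U : Submodule F (Fin n → F)) : mapGL (A * B) U = mapGL A (mapGL B U) := by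
  simp only [mapGL, Units.val_mul, Matrix.toLin'_mul, Submodule.map_comp]

lemma mapGL_one {F : Type*} [Field F] {n : ℕ} (U : Submodule F (Fin n → F)) :
    mapGL (1 : GL (Fin n) F) U = U := by
  simp only [mapGL, Units.val_one, Matrix.toLin'_one, Submodule.map_id]

lemma sum_two_mul_succ (n : ℕ) : ∑ j ∈ Finset.range n, 2 * (j + 1) = n * n + n := by
  induction n with
  | zero => simp
  | succ m ih => rw [Finset.sum_range_succ, ih]; ring

lemma sum_min_eq (k : ℕ) (hk : 0 < k) :
    ∑ j ∈ Finset.range (2 * k - 1), 2 * min (j + 1) (2 * k - (j + 1)) = 2 * k ^ 2 := by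
  have hsplit : ∑ j ∈ Finset.range (2 * k - 1), 2 * min (j + 1) (2 * k - (j + 1))
      = ∑ j ∈ Finset.range k, 2 * min (j + 1) (2 * k - (j + 1))
        + ∑ j ∈ Finset.Ico k (2 * k - 1), 2 * min (j + 1) (2 * k - (j + 1)) := by
    rw [Finset.range_eq_Ico, Finset.range_eq_Ico]
    exact (Finset.sum_Ico_consecutive (fun j => 2 * min (j + 1) (2 * k - (j + 1))) (Nat.zero_le k) (show k ≤ 2 * k - 1 by omega)).symm
  rw [hsplit]
  have h1 : ∑ j ∈ Finset.range k, 2 * min (j + 1) (2 * k - (j + 1))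
      = ∑ j ∈ Finset.range k, 2 * (j + 1) := by
    refine Finset.sum_congr rfl fun j hj => ?_
    simp only [Finset.mem_range] at hj
    congr 1
    omega
  have h2 : ∑ j ∈ Finset.Ico k (2 * k - 1), 2 * min (j + 1) (2 * k - (j + 1))
      = ∑ j ∈ Finset.range (k - 1), 2 * ((k - 1) - 1 - j + 1) := by
    rw [Finset.sum_Ico_eq_sum_range]
    refine Finset.sum_congr (by congr 1; omega) fun j hj => ?_
    simp only [Finset.mem_range] at hj
    congr 1
    omega
  rw [h1, h2, Finset.sum_range_reflect (fun j => 2 * (j + 1)) (k - 1),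
    sum_two_mul_succ, sum_two_mul_succ]
  obtain ⟨n, rfl⟩ : ∃ n, k = n + 1 := ⟨k - 1, by omega⟩
  simp only [Nat.add_sub_cancel]
  ring

/-- Let `F = (F_1, …, F_{2k−1})` be a full flag on `F_q^{2k}` and `T` a
subgroup of `GL(2k, q)` such that any two distinct subspaces in `Orb_T(F_k)` intersect
trivially and `Stab_T(F_k)` is the trivial subgroup. Then any two distinct flags in the
orbit flag code `Orb_T(F)` are at flag distance exactly `2k²`. -/
theorem orbit_flag_code_optimum_distance_of_trivial_stabilizer
    {F : Type*} [Field F] [Fintype F] {k : ℕ} (hk : 0 < k)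
    (Fl : ℕ → Submodule F (Fin (2 * k) → F))
    (hdim : ∀ i, 1 ≤ i → i ≤ 2 * k - 1 → finrank F (Fl i) = i)
    (hmono : ∀ i j, 1 ≤ i → i < j → j ≤ 2 * k - 1 → Fl i < Fl j)
    (T : Subgroup (GL (Fin (2 * k)) F))
    (hmax : ∀ A ∈ T, ∀ B ∈ T,
      mapGL A (Fl k) ≠ mapGL B (Fl k) → mapGL A (Fl k) ⊓ mapGL B (Fl k) = ⊥)
    (hstab : ∀ A ∈ T, mapGL A (Fl k) = Fl k → A = 1) :
    ∀ G ∈ {G : Fin (2 * k - 1) → Submodule F (Fin (2 * k) → F) |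
        ∃ A ∈ T, G = fun j => mapGL A (Fl (j.val + 1))},
    ∀ G' ∈ {G : Fin (2 * k - 1) → Submodule F (Fin (2 * k) → F) |
        ∃ A ∈ T, G = fun j => mapGL A (Fl (j.val + 1))},
      G ≠ G' → ∑ j : Fin (2 * k - 1), subspaceDist (G j) (G' j) = 2 * k ^ 2 := by
  rintro G ⟨A, hA, rfl⟩ G' ⟨B, hB, rfl⟩ hne
  have hkle : k ≤ 2 * k - 1 := by omega
  have hk1 : 1 ≤ k := hk
  -- The two images of `Fl k` are distinct
  have hABne : mapGL A (Fl k) ≠ mapGL B (Fl k) := by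
    intro h
    apply hne
    have hstabAB : mapGL (B⁻¹ * A) (Fl k) = Fl k := by
      rw [mapGL_mul, h, ← mapGL_mul, inv_mul_cancel, mapGL_one]
    have : B⁻¹ * A = 1 := hstab _ (T.mul_mem (T.inv_mem hB) hA) hstabAB
    have hAB : A = B := by
      have := congrArg (B * ·) this
      simpa [mul_assoc] using this
    rw [hAB]
  -- Their intersection is trivial and their span is everything
  have hinf : mapGL A (Fl k) ⊓ mapGL B (Fl k) = ⊥ := hmax A hA B hB hABne
  have hrankV : finrank F (Fin (2 * k) → F) = 2 * k := by
    rw [Module.finrank_fintype_fun_eq_card, Fintype.card_fin]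
  have hrkA : finrank F (mapGL A (Fl k)) = k := by
    rw [finrank_mapGL, hdim k hk1 hkle]
  have hrkB : finrank F (mapGL B (Fl k)) = k := by
    rw [finrank_mapGL, hdim k hk1 hkle]
  have hsup : mapGL A (Fl k) ⊔ mapGL B (Fl k) = ⊤ := by
    apply Submodule.eq_top_of_finrank_eq
    have := Submodule.finrank_sup_add_finrank_inf_eq (mapGL A (Fl k)) (mapGL B (Fl k))
    rw [hinf, hrkA, hrkB] at this
    simp only [finrank_bot] at this
    omega
  -- per-index computation of the subspace distance
  have hterm : ∀ j : Fin (2 * k - 1),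
      subspaceDist (mapGL A (Fl (j.val + 1))) (mapGL B (Fl (j.val + 1)))
        = 2 * min (j.val + 1) (2 * k - (j.val + 1)) := by
    intro j
    set i := j.val + 1 with hi
    have hij : i ≤ 2 * k - 1 := by omega
    have hi1 : 1 ≤ i := by omega
    have hrkAi : finrank F (mapGL A (Fl i)) = i := by rw [finrank_mapGL, hdim i hi1 hij]
    have hrkBi : finrank F (mapGL B (Fl i)) = i := by rw [finrank_mapGL, hdim i hi1 hij]
    rcases le_or_gt i k with hik | hik
    · -- small indices: trivial intersection
      have hle : Fl i ≤ Fl k := by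
        rcases eq_or_lt_of_le hik with h | h
        · rw [h]
        · exact (hmono i k hi1 h hkle).le
      have hinfi : mapGL A (Fl i) ⊓ mapGL B (Fl i) = ⊥ := by
        rw [← le_bot_iff, ← hinf]
        exact inf_le_inf (mapGL_mono A hle) (mapGL_mono B hle)
      rw [subspaceDist, hinfi, hrkAi, hrkBi]
      simp only [finrank_bot]
      omega
    · -- large indices: the sum of the two subspaces is everything
      have hle : Fl k ≤ Fl i := (hmono k i hk1 hik hij).le
      have hsupi : mapGL A (Fl i) ⊔ mapGL B (Fl i) = ⊤ := by
        rw [← top_le_iff, ← hsup]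
        exact sup_le_sup (mapGL_mono A hle) (mapGL_mono B hle)
      have hkey := Submodule.finrank_sup_add_finrank_inf_eq (mapGL A (Fl i)) (mapGL B (Fl i))
      rw [hsupi, hrkAi, hrkBi, finrank_top, hrankV] at hkey
      rw [subspaceDist, hrkAi, hrkBi]
      omega
  calc ∑ j : Fin (2 * k - 1), subspaceDist (mapGL A (Fl (j.val + 1))) (mapGL B (Fl (j.val + 1)))
      = ∑ j : Fin (2 * k - 1), 2 * min (j.val + 1) (2 * k - (j.val + 1)) :=
        Finset.sum_congr rfl fun j _ => hterm j
    _ = ∑ j ∈ Finset.range (2 * k - 1), 2 * min (j + 1) (2 * k - (j + 1)) :=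
        Fin.sum_univ_eq_sum_range (fun j => 2 * min (j + 1) (2 * k - (j + 1))) (2 * k - 1)
    _ = 2 * k ^ 2 := sum_min_eq k hk
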